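/- Stochastic representation of the generalized Gaussian: if U is uniformly distributed on the unit sphere S^{m−1}, V ∼ Gamma(m/s, scale 2) independent of U, and R = V^{1/s}, then X = U·R has density f(x;m,s) = (Γ(m/2+1)/(Γ(m/s+1)π^{m/2}2^{m/s}))·exp(−‖x‖^s/2) on ℝ^m. -/

import Mathlib

open Real MeasureTheory ProbabilityTheory Set Metric ContinuousLinearMap
open scoped ENNReal NNReal

lemma image_rpow_Ioi (s : ℝ) (hs : 0 < s) : (fun r : ℝ => r ^ s) '' Set.Ioi 0 = Set.Ioi 0 := by
  ext y
  constructor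
  · rintro ⟨r, hr, rfl⟩; exact Real.rpow_pos_of_pos hr s
  · intro hy
    refine ⟨y ^ (1/s), Real.rpow_pos_of_pos hy _, ?_⟩
    show (y ^ (1/s)) ^ s = y
    rw [← Real.rpow_mul (le_of_lt hy), one_div, inv_mul_cancel₀ hs.ne', Real.rpow_one]

lemma gamma_cov (m : ℕ) (hm : 1 ≤ m) (s : ℝ) (hs : 0 < s) (g : ℝ → ℝ≥0∞) :
    ∫⁻ v, gammaPDF ((m:ℝ)/s) (1/2) v * g (v ^ (1/s)) ∂volume
      = ENNReal.ofReal (s * (2 ^ ((m:ℝ)/s))⁻¹ / Real.Gamma ((m:ℝ)/s)) *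
        ∫⁻ r in Set.Ioi (0:ℝ),
          ENNReal.ofReal (r ^ ((m:ℝ) - 1) * Real.exp (-(r ^ s) / 2)) * g r := by
  set F : ℝ → ℝ≥0∞ := fun v => gammaPDF ((m:ℝ)/s) (1/2) v * g (v ^ (1/s)) with hF
  have h0 : ∫⁻ v, F v ∂volume = ∫⁻ v in Set.Ioi (0:ℝ), F v ∂volume := by
    rw [← lintegral_add_compl F measurableSet_Ioi]
    have hc : (Set.Ioi (0:ℝ))ᶜ = Set.Iic 0 := by simp
    have h1 : ∫⁻ v in Set.Iic (0:ℝ), F v ∂volume = ∫⁻ v in Set.Iio (0:ℝ), F v ∂volume :=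
      (setLIntegral_congr Iio_ae_eq_Iic).symm
    have h2 : ∫⁻ v in Set.Iio (0:ℝ), F v ∂volume = ∫⁻ v in Set.Iio (0:ℝ), 0 ∂volume :=
      setLIntegral_congr_fun measurableSet_Iio (fun v (hv : v < 0) =>
        show gammaPDF _ _ v * _ = 0 by rw [gammaPDF_of_neg hv, zero_mul])
    rw [hc, h1, h2, lintegral_zero, add_zero]
  have hderiv : ∀ x ∈ Set.Ioi (0:ℝ),
      HasFDerivWithinAt (fun r : ℝ => r ^ s)
        (ContinuousLinearMap.smulRight (1 : ℝ →L[ℝ] ℝ) (s * x ^ (s - 1))) (Set.Ioi 0) x :=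
    fun x hx => ((Real.hasDerivAt_rpow_const (p := s)
      (Or.inl (ne_of_gt hx))).hasDerivWithinAt).hasFDerivWithinAt
  have hinj : Set.InjOn (fun r : ℝ => r ^ s) (Set.Ioi 0) := by
    have mono : StrictMonoOn (fun r : ℝ => r ^ s) (Set.Ioi 0) :=
      fun a ha b hb h => Real.rpow_lt_rpow (le_of_lt ha) h hs
    exact mono.injOn
  have himg := lintegral_image_eq_lintegral_abs_det_fderiv_mul volume measurableSet_Ioi
    hderiv hinj F
  rw [image_rpow_Ioi s hs] at himg
  simp only [smulRight_one_eq_toSpanSingleton, det_toSpanSingleton] at himg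
  have hpt : ∀ r : ℝ, r ∈ Set.Ioi (0:ℝ) →
      ENNReal.ofReal |s * r ^ (s - 1)| * F (r ^ s)
        = ENNReal.ofReal (s * (2 ^ ((m:ℝ)/s))⁻¹ / Real.Gamma ((m:ℝ)/s)) *
          (ENNReal.ofReal (r ^ ((m:ℝ) - 1) * Real.exp (-(r ^ s) / 2)) * g r) := by
    intro r hr
    have hr' : (0:ℝ) < r := hr
    have harg : ((r ^ s : ℝ)) ^ (1/s) = r := by
      rw [← Real.rpow_mul hr'.le, mul_one_div, div_self hs.ne', Real.rpow_one]
    have hpdf : gammaPDF ((m:ℝ)/s) (1/2) (r ^ s) =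
        ENNReal.ofReal ((1/2 : ℝ) ^ ((m:ℝ)/s) / Real.Gamma ((m:ℝ)/s) *
          (r ^ s) ^ ((m:ℝ)/s - 1) * Real.exp (-(1/2 * r ^ s))) :=
      gammaPDF_of_nonneg (Real.rpow_nonneg hr'.le s)
    rw [hF]
    simp only
    have hΓ : 0 < Real.Gamma ((m:ℝ)/s) := Real.Gamma_pos_of_pos (by positivity)
    rw [harg, hpdf, ← mul_assoc, ← mul_assoc, ← ENNReal.ofReal_mul (abs_nonneg _),
      ← ENNReal.ofReal_mul (div_nonneg (by positivity) hΓ.le)]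
    congr 2
    have hAB : r ^ (s - 1) * (r ^ s) ^ ((m:ℝ)/s - 1) = r ^ ((m:ℝ) - 1) := by
      rw [← Real.rpow_mul hr'.le, ← Real.rpow_add hr']
      congr 1
      field_simp
      ring
    have hE : -(1/2 * r ^ s) = -(r ^ s) / 2 := by ring
    have habs : |s * r ^ (s - 1)| = s * r ^ (s - 1) := abs_of_pos (by positivity)
    have h2 : (1/2 : ℝ) ^ ((m:ℝ)/s) = (2 ^ ((m:ℝ)/s))⁻¹ := by
      rw [one_div, Real.inv_rpow (by norm_num : (0:ℝ) ≤ 2)]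
    rw [habs, hE, h2]
    calc s * r ^ (s-1) * ((2 ^ ((m:ℝ)/s))⁻¹ / Real.Gamma ((m:ℝ)/s) *
          (r ^ s) ^ ((m:ℝ)/s - 1) * Real.exp (-(r^s)/2))
        = s * (2 ^ ((m:ℝ)/s))⁻¹ / Real.Gamma ((m:ℝ)/s) *
          ((r ^ (s-1) * (r ^ s) ^ ((m:ℝ)/s - 1)) * Real.exp (-(r^s)/2)) := by ring
      _ = _ := by rw [hAB]
  rw [h0, himg, setLIntegral_congr_fun measurableSet_Ioi hpt,
    lintegral_const_mul' _ _ ENNReal.ofReal_ne_top]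


lemma polar_lintegral (m : ℕ) (hm : 1 ≤ m) (g : EuclideanSpace ℝ (Fin m) → ℝ≥0∞)
    (hg : Measurable g) :
    ∫⁻ x, g x = ∫⁻ p : sphere (0 : EuclideanSpace ℝ (Fin m)) 1 × Set.Ioi (0:ℝ),
      g ((p.2 : ℝ) • (p.1 : EuclideanSpace ℝ (Fin m)))
      ∂((volume : Measure (EuclideanSpace ℝ (Fin m))).toSphere.prod
        (Measure.volumeIoiPow (m - 1))) := by
  haveI : Nontrivial (EuclideanSpace ℝ (Fin m)) :=
    Module.nontrivial_of_finrank_pos (R := ℝ) (by rw [finrank_euclideanSpace_fin]; omega)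
  have mp := Measure.measurePreserving_homeomorphUnitSphereProd
    (volume : Measure (EuclideanSpace ℝ (Fin m)))
  rw [finrank_euclideanSpace_fin] at mp
  have hφ : Measurable fun p : sphere (0 : EuclideanSpace ℝ (Fin m)) 1 × Set.Ioi (0:ℝ) =>
      g ((p.2 : ℝ) • (p.1 : EuclideanSpace ℝ (Fin m))) := by
    apply hg.comp
    exact ((measurable_subtype_coe.comp measurable_snd).smul
      (measurable_subtype_coe.comp measurable_fst))
  rw [← mp.lintegral_comp hφ]
  have key : ∀ a : ({(0 : EuclideanSpace ℝ (Fin m))}ᶜ : Set _),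
      g ((((homeomorphUnitSphereProd _) a).2 : ℝ) •
        (((homeomorphUnitSphereProd _) a).1 : EuclideanSpace ℝ (Fin m))) = g a.val := by
    intro a
    congr 1
    simp [smul_inv_smul₀ (norm_ne_zero_iff.2 a.2)]
  rw [lintegral_congr key,
    lintegral_subtype_comap (measurableSet_singleton (0 : EuclideanSpace ℝ (Fin m))).compl,
    restrict_compl_singleton]

theorem gg_stochastic_representation (m : ℕ) (hm : 1 ≤ m) (s : ℝ) (hs : 0 < s)
    {Ω : Type*} [MeasurableSpace Ω] (P : Measure Ω) [IsProbabilityMeasure P]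
    (U : Ω → Metric.sphere (0 : EuclideanSpace ℝ (Fin m)) 1) (V : Ω → ℝ)
    (hU_meas : Measurable U) (hV_meas : Measurable V)
    (hU_unif : Measure.map U P =
      ((volume : Measure (EuclideanSpace ℝ (Fin m))).toSphere Set.univ)⁻¹ •
        (volume : Measure (EuclideanSpace ℝ (Fin m))).toSphere)
    (hV_gamma : Measure.map V P =
      volume.withDensity (ProbabilityTheory.gammaPDF ((m : ℝ) / s) (1 / 2)))
    (hUV_indep : IndepFun U V P)
    (X : Ω → EuclideanSpace ℝ (Fin m))
    (hX : ∀ ω, X ω = (V ω) ^ (1 / s) • (U ω : EuclideanSpace ℝ (Fin m))) :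
    Measure.map X P = volume.withDensity (fun x =>
      ENNReal.ofReal
        ((Real.Gamma (m / 2 + 1) /
            (Real.Gamma (m / s + 1) * Real.pi ^ ((m : ℝ) / 2) * 2 ^ ((m : ℝ) / s))) *
          Real.exp (-‖x‖ ^ s / 2))) := by
  haveI : Nontrivial (EuclideanSpace ℝ (Fin m)) :=
    Module.nontrivial_of_finrank_pos (R := ℝ) (by rw [finrank_euclideanSpace_fin]; omega)
  haveI : Nonempty (Fin m) := Fin.pos_iff_nonempty.mp (by omega)
  set C : ℝ := Real.Gamma (m / 2 + 1) /
      (Real.Gamma (m / s + 1) * Real.pi ^ ((m : ℝ) / 2) * 2 ^ ((m : ℝ) / s)) with hCdef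
  set f : EuclideanSpace ℝ (Fin m) → ℝ≥0∞ :=
    fun x => ENNReal.ofReal (C * Real.exp (-‖x‖ ^ s / 2)) with hfdef
  have hfm : Measurable f := by
    apply ENNReal.measurable_ofReal.comp
    fun_prop
  set ν := (volume : Measure (EuclideanSpace ℝ (Fin m))).toSphere with hν
  set c : ℝ≥0∞ := ν Set.univ with hcdef
  set K : ℝ≥0∞ := ENNReal.ofReal (s * (2 ^ ((m:ℝ)/s))⁻¹ / Real.Gamma ((m:ℝ)/s)) with hKdef
  have hXm : Measurable X := by
    have hXe : X = fun ω => (V ω) ^ (1 / s) • (U ω : EuclideanSpace ℝ (Fin m)) := funext hX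
    rw [hXe]
    fun_prop
  -- the scalar identity
  have hΓ2pos : 0 < Real.Gamma ((m:ℝ)/2 + 1) := Real.Gamma_pos_of_pos (by positivity)
  have hΓspos : 0 < Real.Gamma ((m:ℝ)/s) := Real.Gamma_pos_of_pos (by positivity)
  have hCnonneg : 0 ≤ C := by
    rw [hCdef]
    have := Real.Gamma_pos_of_pos (show 0 < (m:ℝ)/s + 1 by positivity)
    have h2 : (0:ℝ) < 2 ^ ((m:ℝ)/s) := Real.rpow_pos_of_pos two_pos _
    have hπ : (0:ℝ) < π ^ ((m:ℝ)/2) := Real.rpow_pos_of_pos Real.pi_pos _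
    positivity
  have hscalar : c⁻¹ * K = ENNReal.ofReal C := by
    have hball := EuclideanSpace.volume_ball (Fin m) 0 1
    have hc : c = ENNReal.ofReal ((m:ℝ) *
        (Real.sqrt π ^ m / Real.Gamma ((m:ℝ)/2 + 1))) := by
      rw [hcdef, hν, Measure.toSphere_apply_univ, finrank_euclideanSpace_fin, hball,
        Fintype.card_fin, ENNReal.ofReal_one, one_pow, one_mul,
        ← ENNReal.ofReal_natCast m, ← ENNReal.ofReal_mul (Nat.cast_nonneg m)]
    have h1 : (0:ℝ) < (m:ℝ) * (Real.sqrt π ^ m / Real.Gamma ((m:ℝ)/2 + 1)) := by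
      have : (0:ℝ) < Real.sqrt π ^ m := pow_pos (Real.sqrt_pos.mpr Real.pi_pos) m
      have hm' : (0:ℝ) < (m:ℝ) := by exact_mod_cast hm
      exact mul_pos hm' (div_pos this hΓ2pos)
    rw [hc, hKdef, ← ENNReal.ofReal_inv_of_pos h1,
      ← ENNReal.ofReal_mul (inv_nonneg.mpr h1.le)]
    congr 1
    have hsqrt : Real.sqrt π ^ m = π ^ ((m:ℝ)/2) := by
      rw [Real.sqrt_eq_rpow, ← Real.rpow_natCast (π ^ ((1:ℝ)/2)) m,
        ← Real.rpow_mul Real.pi_pos.le]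
      congr 1
      ring
    have hΓ1 : Real.Gamma ((m:ℝ)/s + 1) = ((m:ℝ)/s) * Real.Gamma ((m:ℝ)/s) :=
      Real.Gamma_add_one (by positivity)
    have hπ : π ^ ((m:ℝ)/2) ≠ 0 := (Real.rpow_pos_of_pos Real.pi_pos _).ne'
    have h2 : (2:ℝ) ^ ((m:ℝ)/s) ≠ 0 := (Real.rpow_pos_of_pos two_pos _).ne'
    have hm0 : (m:ℝ) ≠ 0 := by positivity
    rw [hCdef, hsqrt, hΓ1]
    field_simp
  -- the key lintegral identity
  have key : ∀ g : EuclideanSpace ℝ (Fin m) → ℝ≥0∞, Measurable g →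
      ∫⁻ x, g x ∂(Measure.map X P) = ∫⁻ x, g x ∂(volume.withDensity f) := by
    intro g hg
    set J : (Metric.sphere (0 : EuclideanSpace ℝ (Fin m)) 1) → ℝ≥0∞ := fun u =>
      ∫⁻ r in Set.Ioi (0:ℝ), ENNReal.ofReal (r ^ ((m:ℝ) - 1) * Real.exp (-(r ^ s) / 2)) *
        g (r • (u : EuclideanSpace ℝ (Fin m))) ∂volume with hJ
    have hLHS : ∫⁻ x, g x ∂(Measure.map X P) = c⁻¹ * (K * ∫⁻ u, J u ∂ν) := by
      have hpair := (indepFun_iff_map_prod_eq_prod_map_map hU_meas.aemeasurable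
        hV_meas.aemeasurable).mp hUV_indep
      have hφm : Measurable fun p : (Metric.sphere (0 : EuclideanSpace ℝ (Fin m)) 1) × ℝ =>
          g ((p.2 ^ (1/s)) • (p.1 : EuclideanSpace ℝ (Fin m))) := by fun_prop
      calc ∫⁻ x, g x ∂(Measure.map X P)
          = ∫⁻ ω, g (X ω) ∂P := lintegral_map hg hXm
        _ = ∫⁻ ω, g ((V ω ^ (1/s)) • (U ω : EuclideanSpace ℝ (Fin m))) ∂P :=
            lintegral_congr fun ω => by rw [hX]
        _ = ∫⁻ p : (Metric.sphere (0 : EuclideanSpace ℝ (Fin m)) 1) × ℝ,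
              g ((p.2 ^ (1/s)) • (p.1 : EuclideanSpace ℝ (Fin m)))
              ∂(Measure.map (fun ω => (U ω, V ω)) P) :=
            (lintegral_map hφm (hU_meas.prodMk hV_meas)).symm
        _ = ∫⁻ p : (Metric.sphere (0 : EuclideanSpace ℝ (Fin m)) 1) × ℝ,
              g ((p.2 ^ (1/s)) • (p.1 : EuclideanSpace ℝ (Fin m)))
              ∂((c⁻¹ • ν).prod
                (volume.withDensity (gammaPDF ((m : ℝ) / s) (1 / 2)))) := by
            rw [hpair, hU_unif, hV_gamma]
        _ = ∫⁻ u, (∫⁻ v, g ((v ^ (1/s)) • (u : EuclideanSpace ℝ (Fin m)))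
              ∂(volume.withDensity (gammaPDF ((m : ℝ) / s) (1 / 2)))) ∂(c⁻¹ • ν) :=
            lintegral_prod _ hφm.aemeasurable
        _ = c⁻¹ * ∫⁻ u, (∫⁻ v, g ((v ^ (1/s)) • (u : EuclideanSpace ℝ (Fin m)))
              ∂(volume.withDensity (gammaPDF ((m : ℝ) / s) (1 / 2)))) ∂ν :=
            lintegral_smul_measure _ _
        _ = c⁻¹ * ∫⁻ u, K * J u ∂ν := by
            congr 1
            refine lintegral_congr fun u => ?_
            have hgpdf : Measurable (gammaPDF ((m:ℝ)/s) (1/2)) :=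
              (measurable_gammaPDFReal _ _).ennreal_ofReal
            rw [lintegral_withDensity_eq_lintegral_mul _ hgpdf (by fun_prop)]
            exact gamma_cov m hm s hs (fun r => g (r • (u : EuclideanSpace ℝ (Fin m))))
        _ = c⁻¹ * (K * ∫⁻ u, J u ∂ν) := by
            rw [lintegral_const_mul' K _ ENNReal.ofReal_ne_top]
    have hRHS : ∫⁻ x, g x ∂(volume.withDensity f)
        = ENNReal.ofReal C * ∫⁻ u, J u ∂ν := by
      have hψm : Measurable fun p : (Metric.sphere (0 : EuclideanSpace ℝ (Fin m)) 1) ×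
          Set.Ioi (0:ℝ) =>
          (f * g) (((p.2 : ℝ)) • (p.1 : EuclideanSpace ℝ (Fin m))) := by
        apply (hfm.mul hg).comp
        exact ((measurable_subtype_coe.comp measurable_snd).smul
          (measurable_subtype_coe.comp measurable_fst))
      have hwm : Measurable fun r : Set.Ioi (0:ℝ) => ENNReal.ofReal ((r : ℝ) ^ (m - 1)) :=
        (measurable_subtype_coe.pow_const _).ennreal_ofReal
      calc ∫⁻ x, g x ∂(volume.withDensity f)
          = ∫⁻ x, (f * g) x ∂volume := lintegral_withDensity_eq_lintegral_mul _ hfm hg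
        _ = ∫⁻ p : (Metric.sphere (0 : EuclideanSpace ℝ (Fin m)) 1) × Set.Ioi (0:ℝ),
              (f * g) (((p.2 : ℝ)) • (p.1 : EuclideanSpace ℝ (Fin m)))
              ∂(ν.prod (Measure.volumeIoiPow (m - 1))) :=
            polar_lintegral m hm (f * g) (hfm.mul hg)
        _ = ∫⁻ u, (∫⁻ r : Set.Ioi (0:ℝ), (f * g) (((r : ℝ)) • (u : EuclideanSpace ℝ (Fin m)))
              ∂(Measure.volumeIoiPow (m - 1))) ∂ν := lintegral_prod _ hψm.aemeasurable
        _ = ∫⁻ u, ENNReal.ofReal C * J u ∂ν := by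
            refine lintegral_congr fun u => ?_
            rw [Measure.volumeIoiPow,
              lintegral_withDensity_eq_lintegral_mul _ hwm (by fun_prop)]
            refine Eq.trans (lintegral_subtype_comap measurableSet_Ioi
              (fun r : ℝ => ENNReal.ofReal (r ^ (m - 1)) *
                (f * g) (r • (u : EuclideanSpace ℝ (Fin m))))) ?_
            rw [setLIntegral_congr_fun measurableSet_Ioi
              (fun r (hr : (0:ℝ) < r) => ?_),
              hJ, lintegral_const_mul' _ _ ENNReal.ofReal_ne_top]
            have hnorm : ‖r • (u : EuclideanSpace ℝ (Fin m))‖ = r := by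
              rw [norm_smul, mem_sphere_zero_iff_norm.mp u.2, mul_one,
                Real.norm_eq_abs, abs_of_pos hr]
            show ENNReal.ofReal (r ^ (m - 1)) *
                (f (r • (u : EuclideanSpace ℝ (Fin m))) *
                  g (r • (u : EuclideanSpace ℝ (Fin m)))) = _
            rw [hfdef]
            simp only
            rw [hnorm]
            rw [← Real.rpow_natCast r (m - 1), Nat.cast_sub hm, Nat.cast_one,
              ← mul_assoc, ← ENNReal.ofReal_mul (Real.rpow_nonneg hr.le _), ← mul_assoc,
              ← mul_assoc (ENNReal.ofReal C), ← ENNReal.ofReal_mul hCnonneg]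
            congr 2
            ring
        _ = ENNReal.ofReal C * ∫⁻ u, J u ∂ν :=
            lintegral_const_mul' _ _ ENNReal.ofReal_ne_top
    rw [hLHS, hRHS, ← mul_assoc, hscalar]
  refine Measure.ext fun A hA => ?_
  rw [← lintegral_indicator_one hA, ← lintegral_indicator_one hA,
    key _ (measurable_one.indicator hA)]
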